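/- Let G = (V, E) be a finite directed acyclic graph, let π be an automorphism of G, and let u ∈ V. Then there is no directed path from u to π(u), i.e. ¬(u ⇝ π(u)). -/

import Mathlib

/-- Reachability: there is a nonempty directed path from `u` to `v`. -/
def Reach {V : Type*} (E : V → V → Prop) : V → V → Prop := Relation.TransGen E

/-- Two vertices are independent if neither reaches the other. -/
def Indep {V : Type*} (E : V → V → Prop) (u v : V) : Prop :=
  ¬ Reach E u v ∧ ¬ Reach E v u

/-- `[v]_⊥ = {u : u ⊥ v} ∪ {v}`. -/
def PerpClass {V : Type*} (E : V → V → Prop) (v : V) : Set V :=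
  {u | Indep E u v} ∪ {v}

/-- A set of vertices is independent if its elements are pairwise independent. -/
def IndepSet {V : Type*} (E : V → V → Prop) (I : Set V) : Prop :=
  ∀ u ∈ I, ∀ v ∈ I, u ≠ v → Indep E u v

/-- A permutation of the vertices is an automorphism of `G` if it preserves the
edge relation in both directions. -/
def IsAut {V : Type*} (E : V → V → Prop) (π : Equiv.Perm V) : Prop :=
  ∀ u v : V, E u v ↔ E (π u) (π v)

/-- in a finite DAG, no vertex reaches its image under an
automorphism. -/
theorem stmt_11 {V : Type*} [Finite V] (E : V → V → Prop)
    (hdag : ∀ v : V, ¬ Reach E v v)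
    (π : Equiv.Perm V) (hπ : IsAut E π) (u : V) :
    ¬ Reach E u (π u) := by
  intro h
  have hmap : ∀ (n : ℕ) (a b : V), Reach E a b → Reach E ((π ^ n) a) ((π ^ n) b) := by
    intro n
    induction n with
    | zero => simp
    | succ k ih =>
      intro a b hab
      have := Relation.TransGen.lift π (fun x y hxy => (hπ x y).mp hxy) _ _ (ih a b hab)
      simpa [pow_succ', Equiv.Perm.mul_apply, Function.onFun, Reach] using this
  have key : ∀ n : ℕ, Reach E u ((π ^ (n + 1)) u) := by
    intro n
    induction n with
    | zero => simpa using h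
    | succ k ih =>
      have step : Reach E ((π ^ (k + 1)) u) ((π ^ (k + 2)) u) := by
        have := hmap (k + 1) u (π u) h
        have hpow : (π ^ (k + 1)) (π u) = (π ^ (k + 2)) u := by
          rw [← Equiv.Perm.mul_apply, ← pow_succ]
        rwa [hpow] at this
      exact ih.trans step
  have hpos : 0 < orderOf π := orderOf_pos π
  obtain ⟨m, hm⟩ := Nat.exists_eq_succ_of_ne_zero hpos.ne'
  have := key m
  rw [← Nat.succ_eq_add_one, ← hm, pow_orderOf_eq_one] at this
  simp at this
  exact hdag u this
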